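/- There exist A₀ > 0 and C > 0 such that for every A ∈ (0, A₀] and every C² function Θ : [0,∞) → ℝ which is positive on [0,∞) and solves Θ''(r) + (5/r)Θ'(r) + (r/2)Θ'(r) + Θ(r) + Θ(r)² = 0 for r > 0 with Θ(0) = A, Θ'(0) = 0, and satisfies Θ(r) ≤ C₁ A (1+r)⁻² for all r ≥ 0 for some constant C₁, one has |Θ'(r)| ≤ C A for all r ≥ 0. Consequently, setting θ_A(x,t) = (t+1)⁻¹ Θ(|x|/√(t+1)), the spatial gradient satisfies |∇_x θ_A(x,t)| ≤ C A t^{−3/2} for all x ∈ ℝ⁶ and t > 1. -/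

import Mathlib

open Real Set MeasureTheory intervalIntegral Filter

noncomputable section

namespace SelfSimAux

/-- The weight `exp (r^2/4)`. -/
def Ee (r : ℝ) : ℝ := Real.exp (r ^ 2 / 4)

lemma Ee_pos (r : ℝ) : 0 < Ee r := Real.exp_pos _

lemma hasDerivAt_Ee (r : ℝ) : HasDerivAt Ee (r / 2 * Ee r) r := by
  have h1 : HasDerivAt (fun r : ℝ => r ^ 2 / 4) (r / 2) r := by
    have := (hasDerivAt_pow 2 r).div_const 4
    exact this.congr_deriv (by push_cast; ring)
  have := h1.exp
  unfold Ee
  simpa [Ee, mul_comm] using this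

lemma continuous_Ee : Continuous Ee := by
  unfold Ee; fun_prop

/-- Key ODE gradient estimate. -/
theorem key (C₁ A : ℝ) (hC₁ : 0 < C₁) (hA : 0 < A)
    (Θ : ℝ → ℝ) (hΘ : ContDiffOn ℝ 2 Θ (Set.Ici 0))
    (hpos : ∀ r ≥ (0:ℝ), 0 < Θ r)
    (hODE : ∀ r > (0:ℝ), deriv (deriv Θ) r + (5 / r) * deriv Θ r + (r / 2) * deriv Θ r
          + Θ r + Θ r ^ 2 = 0)
    (hdecay : ∀ r ≥ (0:ℝ), Θ r ≤ C₁ * A * ((1 + r) ^ 2)⁻¹)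
    (hsmall : C₁ * A ≤ 1) :
    ∀ R > (0:ℝ), |derivWithin Θ (Set.Ici 0) R| ≤ 2 * C₁ * A * (R / (1 + R)) := by
  intro R hR
  set ψ : ℝ → ℝ := derivWithin Θ (Set.Ici 0) with hψdef
  have hψeq : ∀ r > (0:ℝ), ψ r = deriv Θ r := fun r hr =>
    derivWithin_of_mem_nhds (Ici_mem_nhds hr)
  have hψcont : ContinuousOn ψ (Set.Ici 0) :=
    (hΘ.derivWithin (uniqueDiffOn_Ici 0) (m := 1) (by norm_num)).continuousOn
  set g : ℝ → ℝ := fun r => r ^ 5 * Ee r * ψ r with hgdef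
  have hgcont : ContinuousOn g (Set.Ici 0) := by
    apply ContinuousOn.mul _ hψcont
    exact (continuous_pow 5).continuousOn.mul continuous_Ee.continuousOn
  -- derivative of g on (0, R)
  have hder : ∀ r ∈ Set.Ioo (0:ℝ) R,
      HasDerivAt g (-(r ^ 5 * Ee r * (Θ r + Θ r ^ 2))) r := by
    intro r hr
    have hr0 : (0:ℝ) < r := hr.1
    have hΘopen : ContDiffOn ℝ 2 Θ (Set.Ioi 0) := hΘ.mono Set.Ioi_subset_Ici_self
    have hd1 : ContDiffOn ℝ 1 (deriv Θ) (Set.Ioi 0) :=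
      hΘopen.deriv_of_isOpen isOpen_Ioi (by norm_num)
    have hdiff : DifferentiableAt ℝ (deriv Θ) r :=
      (hd1.differentiableOn (by norm_num)).differentiableAt (isOpen_Ioi.mem_nhds hr0)
    have hΘ'' : HasDerivAt (deriv Θ) (deriv (deriv Θ) r) r := hdiff.hasDerivAt
    have hψev : ψ =ᶠ[nhds r] deriv Θ :=
      Filter.eventuallyEq_of_mem (isOpen_Ioi.mem_nhds hr0) (fun s hs => hψeq s hs)
    have hψ'' : HasDerivAt ψ (deriv (deriv Θ) r) r := hΘ''.congr_of_eventuallyEq hψev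
    have hpoly : HasDerivAt (fun r : ℝ => r ^ 5 * Ee r)
        ((5:ℝ) * r ^ 4 * Ee r + r ^ 5 * (r / 2 * Ee r)) r := by
      have := (hasDerivAt_pow 5 r).mul (hasDerivAt_Ee r)
      exact this.congr_deriv (by push_cast; ring)
    have htot : HasDerivAt g
        (((5:ℝ) * r ^ 4 * Ee r + r ^ 5 * (r / 2 * Ee r)) * ψ r
          + r ^ 5 * Ee r * deriv (deriv Θ) r) r := hpoly.mul hψ''
    convert htot using 1
    have hode := hODE r hr0
    have h2 : deriv (deriv Θ) r
        = -((5 / r) * deriv Θ r + (r / 2) * deriv Θ r + Θ r + Θ r ^ 2) := by linarith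
    rw [h2, hψeq r hr0]
    have hrne : r ≠ 0 := ne_of_gt hr0
    field_simp
    try ring
  -- integrability of the derivative
  have hcontq : ContinuousOn (fun r : ℝ => r ^ 5 * Ee r * (Θ r + Θ r ^ 2)) (Set.Icc 0 R) := by
    have hΘc : ContinuousOn Θ (Set.Icc 0 R) :=
      hΘ.continuousOn.mono (Set.Icc_subset_Ici_self)
    exact ((continuous_pow 5).continuousOn.mul continuous_Ee.continuousOn).mul
      (hΘc.add (hΘc.pow 2))
  have hint : IntervalIntegrable (fun r : ℝ => -(r ^ 5 * Ee r * (Θ r + Θ r ^ 2)))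
      volume 0 R := by
    apply ContinuousOn.intervalIntegrable
    rw [Set.uIcc_of_le hR.le]
    exact hcontq.neg
  have hFTC : ∫ r in (0:ℝ)..R, -(r ^ 5 * Ee r * (Θ r + Θ r ^ 2)) = g R - g 0 :=
    integral_eq_sub_of_hasDerivAt_of_le hR.le
      (hgcont.mono Set.Icc_subset_Ici_self) hder hint
  have hg0 : g 0 = 0 := by simp [hgdef]
  -- comparison function G r = r^6 (1+r)⁻¹ Ee r
  set G : ℝ → ℝ := fun r => r ^ 6 * (1 + r)⁻¹ * Ee r with hGdef
  set DG : ℝ → ℝ := fun r =>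
    ((6:ℝ) * r ^ 5 * (1 + r)⁻¹ + r ^ 6 * (-(1 / (1 + r) ^ 2))) * Ee r
      + r ^ 6 * (1 + r)⁻¹ * (r / 2 * Ee r) with hDGdef
  have hGder : ∀ r ∈ Set.Icc (0:ℝ) R, HasDerivAt G (DG r) r := by
    intro r hr
    have hne : (1 + r) ≠ 0 := by nlinarith [hr.1]
    have hinv : HasDerivAt (fun r : ℝ => (1 + r)⁻¹) (-(1 / (1 + r) ^ 2)) r := by
      have h1 : HasDerivAt (fun r : ℝ => 1 + r) 1 r := by
        simpa using (hasDerivAt_id r).const_add 1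
      have h2 := h1.inv hne
      exact h2.congr_deriv (by ring)
    have hp6 : HasDerivAt (fun r : ℝ => r ^ 6) ((6:ℝ) * r ^ 5) r := by
      simpa using hasDerivAt_pow 6 r
    exact ((hp6.mul hinv).mul (hasDerivAt_Ee r))
  have hDGcont : ContinuousOn DG (Set.Icc 0 R) := by
    have hne : ∀ r ∈ Set.Icc (0:ℝ) R, (1 + r) ≠ 0 := fun r hr => by nlinarith [hr.1]
    have h1 : ContinuousOn (fun r : ℝ => (1 + r)⁻¹) (Set.Icc 0 R) :=
      (continuous_const.add continuous_id).continuousOn.inv₀ hne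
    have h2 : ContinuousOn (fun r : ℝ => -(1 / (1 + r) ^ 2)) (Set.Icc 0 R) := by
      apply ContinuousOn.neg
      apply ContinuousOn.div continuous_const.continuousOn
      · exact ((continuous_const.add continuous_id).pow 2).continuousOn
      · intro r hr; exact pow_ne_zero _ (hne r hr)
    have c1 : ContinuousOn (fun r : ℝ => (6:ℝ) * r ^ 5 * (1 + r)⁻¹) (Set.Icc 0 R) :=
      (continuous_const.mul (continuous_pow 5)).continuousOn.mul h1
    have c2 : ContinuousOn (fun r : ℝ => r ^ 6 * -(1 / (1 + r) ^ 2)) (Set.Icc 0 R) :=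
      (continuous_pow 6).continuousOn.mul h2
    have c3 : ContinuousOn (fun r : ℝ => r / 2 * Ee r) (Set.Icc 0 R) :=
      ((continuous_id.div_const 2).mul continuous_Ee).continuousOn
    exact ((c1.add c2).mul continuous_Ee.continuousOn).add
      (((continuous_pow 6).continuousOn.mul h1).mul c3)
  have hDGint : IntervalIntegrable (fun r => 2 * C₁ * A * DG r) volume 0 R := by
    apply ContinuousOn.intervalIntegrable
    rw [Set.uIcc_of_le hR.le]
    exact continuousOn_const.mul hDGcont
  have hqint : IntervalIntegrable (fun r : ℝ => r ^ 5 * Ee r * (Θ r + Θ r ^ 2)) volume 0 R := by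
    apply ContinuousOn.intervalIntegrable
    rw [Set.uIcc_of_le hR.le]; exact hcontq
  -- pointwise comparison
  have hptwise : ∀ r ∈ Set.Icc (0:ℝ) R,
      r ^ 5 * Ee r * (Θ r + Θ r ^ 2) ≤ 2 * C₁ * A * DG r := by
    intro r hr
    have hr0 : (0:ℝ) ≤ r := hr.1
    have hΘr := hpos r hr0
    have hdec := hdecay r hr0
    have h1r : (0:ℝ) < 1 + r := by linarith
    have hinvle : ((1 + r) ^ 2)⁻¹ ≤ 1 := by
      have h1 : (1:ℝ) ≤ (1 + r) ^ 2 := by nlinarith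
      have := inv_anti₀ (by norm_num : (0:ℝ) < 1) h1
      simpa using this
    have hΘle1 : Θ r ≤ 1 := by
      nlinarith [mul_pos hC₁ hA]
    have hsum : Θ r + Θ r ^ 2 ≤ 2 * (C₁ * A * ((1 + r) ^ 2)⁻¹) := by nlinarith
    have hEe := Ee_pos r
    have hne : (1 + r) ≠ 0 := ne_of_gt h1r
    have hnum : (0:ℝ) ≤ 5 * r ^ 5 + 5 * r ^ 6 + (r ^ 7 + r ^ 8) / 2 := by
      nlinarith [pow_nonneg hr0 5, pow_nonneg hr0 6, pow_nonneg hr0 7, pow_nonneg hr0 8]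
    have hfrac : (0:ℝ) ≤ (5 * r ^ 5 + 5 * r ^ 6 + (r ^ 7 + r ^ 8) / 2) / (1 + r) ^ 2 :=
      div_nonneg hnum (by positivity)
    have hkeyeq : (6:ℝ) * r ^ 5 * (1 + r)⁻¹ + r ^ 6 * -(1 / (1 + r) ^ 2)
        + r ^ 6 * (1 + r)⁻¹ * (r / 2) - r ^ 5 * ((1 + r) ^ 2)⁻¹
        = (5 * r ^ 5 + 5 * r ^ 6 + (r ^ 7 + r ^ 8) / 2) / (1 + r) ^ 2 := by
      field_simp
      ring
    have hkey' : r ^ 5 * ((1 + r) ^ 2)⁻¹ ≤ (6:ℝ) * r ^ 5 * (1 + r)⁻¹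
        + r ^ 6 * -(1 / (1 + r) ^ 2) + r ^ 6 * (1 + r)⁻¹ * (r / 2) := by linarith
    have hb1 : r ^ 5 * Ee r * (Θ r + Θ r ^ 2)
        ≤ 2 * C₁ * A * (r ^ 5 * ((1 + r) ^ 2)⁻¹ * Ee r) := by
      have h5 : (0:ℝ) ≤ r ^ 5 * Ee r := by positivity
      calc r ^ 5 * Ee r * (Θ r + Θ r ^ 2)
          ≤ r ^ 5 * Ee r * (2 * (C₁ * A * ((1 + r) ^ 2)⁻¹)) :=
            mul_le_mul_of_nonneg_left hsum h5
        _ = 2 * C₁ * A * (r ^ 5 * ((1 + r) ^ 2)⁻¹ * Ee r) := by ring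
    have hb2 : r ^ 5 * ((1 + r) ^ 2)⁻¹ * Ee r ≤ DG r := by
      have h3 := mul_le_mul_of_nonneg_right hkey' hEe.le
      have hDGval : DG r = ((6:ℝ) * r ^ 5 * (1 + r)⁻¹ + r ^ 6 * -(1 / (1 + r) ^ 2)
          + r ^ 6 * (1 + r)⁻¹ * (r / 2)) * Ee r := by
        simp only [hDGdef]; ring
      linarith
    have hCA : (0:ℝ) ≤ 2 * C₁ * A := by positivity
    calc r ^ 5 * Ee r * (Θ r + Θ r ^ 2)
        ≤ 2 * C₁ * A * (r ^ 5 * ((1 + r) ^ 2)⁻¹ * Ee r) := hb1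
      _ ≤ 2 * C₁ * A * DG r := mul_le_mul_of_nonneg_left hb2 hCA
  have hmono : ∫ r in (0:ℝ)..R, r ^ 5 * Ee r * (Θ r + Θ r ^ 2)
      ≤ ∫ r in (0:ℝ)..R, 2 * C₁ * A * DG r :=
    intervalIntegral.integral_mono_on hR.le hqint hDGint hptwise
  have hGFTC : ∫ r in (0:ℝ)..R, DG r = G R - G 0 := by
    apply integral_eq_sub_of_hasDerivAt_of_le hR.le
    · have hne : ∀ r ∈ Set.Icc (0:ℝ) R, (1 + r) ≠ 0 := fun r hr => by nlinarith [hr.1]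
      have h1 : ContinuousOn (fun r : ℝ => (1 + r)⁻¹) (Set.Icc 0 R) :=
        (continuous_const.add continuous_id).continuousOn.inv₀ hne
      exact ((continuous_pow 6).continuousOn.mul h1).mul continuous_Ee.continuousOn
    · exact fun r hr => hGder r (Set.mem_Icc_of_Ioo hr)
    · apply ContinuousOn.intervalIntegrable
      rw [Set.uIcc_of_le hR.le]; exact hDGcont
  have hG0 : G 0 = 0 := by simp [hGdef]
  have hqnonneg : (0:ℝ) ≤ ∫ r in (0:ℝ)..R, r ^ 5 * Ee r * (Θ r + Θ r ^ 2) := by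
    apply intervalIntegral.integral_nonneg hR.le
    intro r hr
    have := hpos r hr.1
    have := Ee_pos r
    have : (0:ℝ) ≤ r ^ 5 := pow_nonneg hr.1 5
    positivity
  -- conclude
  have hgR : g R = -∫ r in (0:ℝ)..R, r ^ 5 * Ee r * (Θ r + Θ r ^ 2) := by
    have hneg : ∫ r in (0:ℝ)..R, -(r ^ 5 * Ee r * (Θ r + Θ r ^ 2))
        = -∫ r in (0:ℝ)..R, r ^ 5 * Ee r * (Θ r + Θ r ^ 2) :=
      intervalIntegral.integral_neg
    rw [hneg, hg0] at hFTC
    linarith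
  have hintconst : ∫ r in (0:ℝ)..R, 2 * C₁ * A * DG r = 2 * C₁ * A * G R := by
    rw [intervalIntegral.integral_const_mul, hGFTC, hG0]; ring
  have habs : |g R| ≤ 2 * C₁ * A * G R := by
    rw [hgR, abs_neg, abs_of_nonneg hqnonneg]
    calc _ ≤ ∫ r in (0:ℝ)..R, 2 * C₁ * A * DG r := hmono
    _ = _ := hintconst
  have hEeR := Ee_pos R
  have hR5 : (0:ℝ) < R ^ 5 * Ee R := by positivity
  have h1R : (0:ℝ) < 1 + R := by linarith
  have hfin : |ψ R| * (R ^ 5 * Ee R) ≤ (2 * C₁ * A * (R / (1 + R))) * (R ^ 5 * Ee R) := by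
    have hgRval : |g R| = |ψ R| * (R ^ 5 * Ee R) := by
      rw [hgdef]
      simp only [abs_mul]
      rw [abs_of_nonneg (by positivity : (0:ℝ) ≤ R ^ 5), abs_of_pos hEeR]
      ring
    rw [← hgRval]
    calc |g R| ≤ 2 * C₁ * A * G R := habs
    _ = (2 * C₁ * A * (R / (1 + R))) * (R ^ 5 * Ee R) := by
        simp only [hGdef]
        field_simp
  exact le_of_mul_le_mul_right hfin hR5

/-- Bound on `derivWithin` on all of `Ici 0`. -/
theorem key' (C₁ A : ℝ) (hC₁ : 0 < C₁) (hA : 0 < A)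
    (Θ : ℝ → ℝ) (hΘ : ContDiffOn ℝ 2 Θ (Set.Ici 0))
    (hpos : ∀ r ≥ (0:ℝ), 0 < Θ r)
    (hODE : ∀ r > (0:ℝ), deriv (deriv Θ) r + (5 / r) * deriv Θ r + (r / 2) * deriv Θ r
          + Θ r + Θ r ^ 2 = 0)
    (hdecay : ∀ r ≥ (0:ℝ), Θ r ≤ C₁ * A * ((1 + r) ^ 2)⁻¹)
    (hsmall : C₁ * A ≤ 1) :
    ∀ r ∈ Set.Ici (0:ℝ), |derivWithin Θ (Set.Ici 0) r| ≤ 2 * C₁ * A := by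
  have hb : ∀ r > (0:ℝ), |derivWithin Θ (Set.Ici 0) r| ≤ 2 * C₁ * A := by
    intro r hr
    have h1 := key C₁ A hC₁ hA Θ hΘ hpos hODE hdecay hsmall r hr
    have h2 : r / (1 + r) ≤ 1 := by
      rw [div_le_one (by linarith)]; linarith
    have hCA : (0:ℝ) ≤ 2 * C₁ * A := by positivity
    nlinarith
  intro r hr
  rcases eq_or_lt_of_le (Set.mem_Ici.mp hr) with h0 | h0
  · -- r = 0 : by continuity from the right
    subst h0
    have hψcont : ContinuousOn (derivWithin Θ (Set.Ici 0)) (Set.Ici 0) :=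
      (hΘ.derivWithin (uniqueDiffOn_Ici 0) (m := 1) (by norm_num)).continuousOn
    have htend : Filter.Tendsto (fun r => |derivWithin Θ (Set.Ici 0) r|)
        (nhdsWithin 0 (Set.Ioi 0)) (nhds |derivWithin Θ (Set.Ici 0) 0|) := by
      have := (hψcont 0 Set.self_mem_Ici).tendsto
      exact (this.mono_left (nhdsWithin_mono _ Set.Ioi_subset_Ici_self)).abs
    refine le_of_tendsto htend ?_
    filter_upwards [self_mem_nhdsWithin] with s hs
    exact hb s hs
  · exact hb r h0


theorem selfSimilar_profile_gradient_bound' (C₁ : ℝ) (hC₁ : 0 < C₁) :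
    ∃ A₀ > (0:ℝ), ∃ C > (0:ℝ), ∀ A : ℝ, 0 < A → A ≤ A₀ →
      ∀ Θ : ℝ → ℝ,
        ContDiffOn ℝ 2 Θ (Set.Ici 0) →
        (∀ r ≥ (0:ℝ), 0 < Θ r) →
        (∀ r > (0:ℝ), deriv (deriv Θ) r + (5 / r) * deriv Θ r + (r / 2) * deriv Θ r
          + Θ r + Θ r ^ 2 = 0) →
        Θ 0 = A → deriv Θ 0 = 0 →
        (∀ r ≥ (0:ℝ), Θ r ≤ C₁ * A * ((1 + r) ^ 2)⁻¹) →
        ((∀ r ≥ (0:ℝ), |deriv Θ r| ≤ C * A) ∧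
         ∀ (x : EuclideanSpace ℝ (Fin 6)) (t : ℝ), 1 < t →
           ‖gradient (fun x' : EuclideanSpace ℝ (Fin 6) =>
              (t + 1)⁻¹ * Θ (‖x'‖ / Real.sqrt (t + 1))) x‖
             ≤ C * A * t ^ (-(3:ℝ) / 2)) := by
  refine ⟨C₁⁻¹, by positivity, 2 * C₁, by positivity, ?_⟩
  intro A hA hAle Θ hΘ hpos hODE hΘ0 hΘ'0 hdecay
  have hsmall : C₁ * A ≤ 1 := by
    have h1 : C₁ * A ≤ C₁ * C₁⁻¹ := mul_le_mul_of_nonneg_left hAle hC₁.le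
    rwa [mul_inv_cancel₀ (ne_of_gt hC₁)] at h1
  have hψ := key' C₁ A hC₁ hA Θ hΘ hpos hODE hdecay hsmall
  have hCA : (0:ℝ) < 2 * C₁ * A := by positivity
  -- first conclusion
  have hfirst : ∀ r ≥ (0:ℝ), |deriv Θ r| ≤ 2 * C₁ * A := by
    intro r hr
    rcases eq_or_lt_of_le hr with h0 | h0
    · rw [← h0, hΘ'0]; simpa using hCA.le
    · rw [← derivWithin_of_mem_nhds (Ici_mem_nhds h0)]
      exact hψ r hr
  refine ⟨fun r hr => hfirst r hr, ?_⟩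
  -- gradient part
  intro x t ht
  have ht0 : (0:ℝ) < t := by linarith
  have ht1 : (0:ℝ) < t + 1 := by linarith
  have hs0 : (0:ℝ) < Real.sqrt (t + 1) := Real.sqrt_pos.mpr ht1
  set f : EuclideanSpace ℝ (Fin 6) → ℝ :=
    fun x' => (t + 1)⁻¹ * Θ (‖x'‖ / Real.sqrt (t + 1)) with hfdef
  set L : ℝ := 2 * C₁ * A * ((t + 1) * Real.sqrt (t + 1))⁻¹ with hLdef
  have hL0 : (0:ℝ) ≤ L := by positivity
  -- Lipschitz bound on Θ
  have hΘdiff : DifferentiableOn ℝ Θ (Set.Ici 0) := hΘ.differentiableOn (by norm_num)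
  have hΘlip : ∀ a ∈ Set.Ici (0:ℝ), ∀ b ∈ Set.Ici (0:ℝ),
      |Θ a - Θ b| ≤ 2 * C₁ * A * |a - b| := by
    intro a ha b hb
    have := Convex.norm_image_sub_le_of_norm_derivWithin_le hΘdiff
      (fun r hr => by simpa using hψ r hr) (convex_Ici 0) hb ha
    simpa [Real.norm_eq_abs] using this
  -- f satisfies a Lipschitz-type bound
  have hflip : ∀ y z : EuclideanSpace ℝ (Fin 6), ‖f y - f z‖ ≤ L * ‖y - z‖ := by
    intro y z
    have hy : ‖y‖ / Real.sqrt (t + 1) ∈ Set.Ici (0:ℝ) := Set.mem_Ici.mpr (by positivity)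
    have hz : ‖z‖ / Real.sqrt (t + 1) ∈ Set.Ici (0:ℝ) := Set.mem_Ici.mpr (by positivity)
    have h1 : |Θ (‖y‖ / Real.sqrt (t + 1)) - Θ (‖z‖ / Real.sqrt (t + 1))|
        ≤ 2 * C₁ * A * |‖y‖ / Real.sqrt (t + 1) - ‖z‖ / Real.sqrt (t + 1)| :=
      hΘlip _ hy _ hz
    have h2 : |‖y‖ / Real.sqrt (t + 1) - ‖z‖ / Real.sqrt (t + 1)|
        = |‖y‖ - ‖z‖| / Real.sqrt (t + 1) := by
      rw [div_sub_div_same, abs_div, abs_of_pos hs0]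
    have h3 : |‖y‖ - ‖z‖| ≤ ‖y - z‖ := abs_norm_sub_norm_le y z
    have hfval : f y - f z
        = (t + 1)⁻¹ * (Θ (‖y‖ / Real.sqrt (t + 1)) - Θ (‖z‖ / Real.sqrt (t + 1))) := by
      simp only [hfdef]; ring
    rw [hfval]
    rw [norm_mul, Real.norm_eq_abs, Real.norm_eq_abs, abs_of_pos (inv_pos.mpr ht1)]
    calc (t + 1)⁻¹ * |Θ (‖y‖ / Real.sqrt (t + 1)) - Θ (‖z‖ / Real.sqrt (t + 1))|
        ≤ (t + 1)⁻¹ * (2 * C₁ * A * (|‖y‖ - ‖z‖| / Real.sqrt (t + 1))) := by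
          rw [← h2]
          exact mul_le_mul_of_nonneg_left h1 (inv_pos.mpr ht1).le
      _ ≤ (t + 1)⁻¹ * (2 * C₁ * A * (‖y - z‖ / Real.sqrt (t + 1))) := by
          apply mul_le_mul_of_nonneg_left _ (inv_pos.mpr ht1).le
          apply mul_le_mul_of_nonneg_left _ hCA.le
          exact div_le_div_of_nonneg_right h3 hs0.le
      _ = L * ‖y - z‖ := by
          rw [hLdef]
          field_simp
          try ring
  -- norm of the gradient
  have hgrad : ‖gradient f x‖ = ‖fderiv ℝ f x‖ := by
    rw [show gradient f x = (InnerProductSpace.toDual ℝ (EuclideanSpace ℝ (Fin 6))).symm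
        (fderiv ℝ f x) from rfl]
    exact LinearIsometryEquiv.norm_map _ _
  have hfd : ‖fderiv ℝ f x‖ ≤ L := by
    apply norm_fderiv_le_of_lip' ℝ hL0
    filter_upwards with y
    exact hflip y x
  -- compare L with the target
  have hrpow : ((t + 1) * Real.sqrt (t + 1))⁻¹ ≤ t ^ (-(3:ℝ) / 2) := by
    have he1 : (t + 1) ^ ((3:ℝ) / 2) = (t + 1) * Real.sqrt (t + 1) := by
      rw [show ((3:ℝ)/2) = 1 + 1/2 by norm_num, Real.rpow_add ht1, Real.rpow_one,
        Real.sqrt_eq_rpow]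
    have h32 : t ^ ((3:ℝ)/2) ≤ (t + 1) ^ ((3:ℝ)/2) :=
      Real.rpow_le_rpow ht0.le (by linarith) (by norm_num)
    have hpos1 : (0:ℝ) < t ^ ((3:ℝ)/2) := Real.rpow_pos_of_pos ht0 _
    have hinv := inv_anti₀ hpos1 h32
    rw [he1] at hinv
    rw [show (-(3:ℝ)/2) = -((3:ℝ)/2) by norm_num, Real.rpow_neg ht0.le]
    exact hinv
  calc ‖gradient f x‖ = ‖fderiv ℝ f x‖ := hgrad
    _ ≤ L := hfd
    _ = 2 * C₁ * A * ((t + 1) * Real.sqrt (t + 1))⁻¹ := hLdef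
    _ ≤ 2 * C₁ * A * t ^ (-(3:ℝ) / 2) := mul_le_mul_of_nonneg_left hrpow hCA.le

end SelfSimAux

end

noncomputable section

/-- `ℝ⁶` as a Euclidean space. -/
abbrev E6 : Type := EuclideanSpace ℝ (Fin 6)

/-- gradient bound for positive decaying solutions of the
six-dimensional self-similar profile ODE: `|Θ'(r)| ≤ C A`, and consequently
`|∇ₓ θ_A(x,t)| ≤ C A t^{−3/2}` for `t > 1`, where `θ_A(x,t) = (t+1)⁻¹ Θ(|x|/√(t+1))`. -/
theorem selfSimilar_profile_gradient_bound (C₁ : ℝ) (hC₁ : 0 < C₁) :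
    ∃ A₀ > (0:ℝ), ∃ C > (0:ℝ), ∀ A : ℝ, 0 < A → A ≤ A₀ →
      ∀ Θ : ℝ → ℝ,
        ContDiffOn ℝ 2 Θ (Set.Ici 0) →
        (∀ r ≥ (0:ℝ), 0 < Θ r) →
        (∀ r > (0:ℝ), deriv (deriv Θ) r + (5 / r) * deriv Θ r + (r / 2) * deriv Θ r
          + Θ r + Θ r ^ 2 = 0) →
        Θ 0 = A → deriv Θ 0 = 0 →
        (∀ r ≥ (0:ℝ), Θ r ≤ C₁ * A * ((1 + r) ^ 2)⁻¹) →
        ((∀ r ≥ (0:ℝ), |deriv Θ r| ≤ C * A) ∧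
         ∀ (x : E6) (t : ℝ), 1 < t →
           ‖gradient (fun x' : E6 => (t + 1)⁻¹ * Θ (‖x'‖ / Real.sqrt (t + 1))) x‖
             ≤ C * A * t ^ (-(3:ℝ) / 2)) := by
  exact SelfSimAux.selfSimilar_profile_gradient_bound' C₁ hC₁
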